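/- If a relation > on a set M is wellfounded (Noetherian), then its list extension on finite lists M* is also wellfounded, where the list extension is the smallest transitive relation closed under congruence (replacing a sublist by a smaller one inside any context) such that a singleton list (n) is greater than any finite list all of whose elements are smaller than n. -/
import Mathlib


/-- The list extension `>_L` of a relation (here phrased via the "smaller than"
relation `lt`, so `ListExt lt l l'` means `l' >_L l`): the smallest transitive
relation closed under congruence such that a singleton list `[n]` is greater
than any finite list all of whose elements are smaller than `n`. -/
inductive ListExt {M : Type*} (lt : M → M → Prop) : List M → List M → Prop
  | single {n : M} {l : List M} : (∀ m ∈ l, lt m n) → ListExt lt l [n]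
  | ctx {k l m n : List M} : ListExt lt m n → ListExt lt (k ++ m ++ l) (k ++ n ++ l)
  | trans {a b c : List M} : ListExt lt a b → ListExt lt b c → ListExt lt a c

/-- One-step Dershowitz–Manna order on multisets. -/
def DMStep {M : Type*} (lt : M → M → Prop) (s t : Multiset M) : Prop :=
  ∃ (a : M) (t' k : Multiset M), t = a ::ₘ t' ∧ s = k + t' ∧ ∀ b ∈ k, lt b a

lemma dmstep_add {M : Type*} {lt : M → M → Prop} {s t : Multiset M}
    (h : DMStep lt s t) (p : Multiset M) : DMStep lt (s + p) (t + p) := by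
  obtain ⟨a, t', k, ht, hs, hk⟩ := h
  exact ⟨a, t' + p, k, by simp [ht], by simp [hs, add_assoc], hk⟩

lemma transGen_dmstep_add {M : Type*} {lt : M → M → Prop} {s t : Multiset M}
    (h : Relation.TransGen (DMStep lt) s t) (p : Multiset M) :
    Relation.TransGen (DMStep lt) (s + p) (t + p) := by
  induction h with
  | single hstep => exact Relation.TransGen.single (dmstep_add hstep p)
  | tail _ hstep ih' => exact ih'.tail (dmstep_add hstep p)

lemma acc_cons {M : Type*} {lt : M → M → Prop} (a : M) (ha : Acc lt a) :
    ∀ m : Multiset M, Acc (DMStep lt) m → Acc (DMStep lt) (a ::ₘ m) := by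
  induction ha with
  | intro a _ iha =>
    intro m hm
    induction hm with
    | intro m _ ihm =>
      constructor
      intro n hn
      obtain ⟨b, t', k, ht, hs, hk⟩ := hn
      rw [Multiset.cons_eq_cons] at ht
      rcases ht with ⟨rfl, rfl⟩ | ⟨-, cs, rfl, rfl⟩
      · -- n = k + m, all elements of k below a
        subst hs
        clear ihm
        induction k using Multiset.induction with
        | empty => simpa using Acc.intro m (by assumption)
        | cons c k ihk =>
          have hc : lt c a := hk c (Multiset.mem_cons_self c k)
          have := iha c hc (k + m) (ihk fun b hb => hk b (Multiset.mem_cons_of_mem hb))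
          simpa [add_comm, Multiset.cons_add] using this
      · -- m = b ::ₘ cs, n = k + (a ::ₘ cs)
        have hstep : DMStep lt (k + cs) (b ::ₘ cs) := ⟨b, cs, k, rfl, rfl, hk⟩
        have := ihm (k + cs) hstep
        subst hs
        have heq : k + (a ::ₘ cs) = a ::ₘ (k + cs) := by
          simp [Multiset.add_cons]
        rw [heq]
        exact this

lemma wf_dmstep {M : Type*} {lt : M → M → Prop} (h : WellFounded lt) :
    WellFounded (DMStep lt) := by
  constructor
  intro m
  induction m using Multiset.induction with
  | empty =>
    constructor
    intro n hn
    obtain ⟨a, t', k, ht, -, -⟩ := hn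
    exact absurd ht.symm (Multiset.cons_ne_zero)
  | cons a m ih => exact acc_cons a (h.apply a) m ih

lemma listExt_to_dm {M : Type*} {lt : M → M → Prop} {l l' : List M}
    (h : ListExt lt l l') :
    Relation.TransGen (DMStep lt) (↑l : Multiset M) (↑l' : Multiset M) := by
  induction h with
  | @single n l hl =>
    exact Relation.TransGen.single ⟨n, 0, (↑l : Multiset M), rfl, by simp, by simpa using hl⟩
  | @ctx k l m n _ ih =>
    have := transGen_dmstep_add ih ((↑k : Multiset M) + (↑l : Multiset M))
    have e1 : (↑(k ++ m ++ l) : Multiset M) = (↑m : Multiset M) + ((↑k : Multiset M) + ↑l) := by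
      have h1 : (↑(k ++ m ++ l) : Multiset M) = ↑k + ↑m + ↑l := by simp
      rw [h1, add_comm (↑k : Multiset M), add_assoc]
    have e2 : (↑(k ++ n ++ l) : Multiset M) = (↑n : Multiset M) + ((↑k : Multiset M) + ↑l) := by
      have h1 : (↑(k ++ n ++ l) : Multiset M) = ↑k + ↑n + ↑l := by simp
      rw [h1, add_comm (↑k : Multiset M), add_assoc]
    rw [e1, e2]
    exact this
  | trans _ _ ih1 ih2 => exact ih1.trans ih2

/-- If a relation `>` on a set `M` is wellfounded (Noetherian), then
its list extension on finite lists `M*` is also wellfounded. -/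
theorem wellFounded_listExt {M : Type*} (lt : M → M → Prop)
    (h : WellFounded lt) : WellFounded (ListExt lt) := by
  have hwf : WellFounded (Relation.TransGen (DMStep lt)) := (wf_dmstep h).transGen
  have : WellFounded (fun l l' : List M =>
      Relation.TransGen (DMStep lt) (↑l : Multiset M) (↑l' : Multiset M)) :=
    InvImage.wf _ hwf
  exact Subrelation.wf (fun hx => listExt_to_dm hx) this
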